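/- Let K ⊂ ℝ be a self-similar set that is the attractor of an IFS {f_i(x) = λ_i x + a_i}_{i=1}^ℓ satisfying the strong separation condition, and let t_0 < t_1 < ⋯ < t_m be real numbers with K_t = ⋃_{j=0}^m (K + t_j). Then K_t is a self-similar set if and only if there exists a finite set 𝒢 of similitudes on ℝ such that ⋃_{g∈𝒢} g(K_t) = K. -/
import Mathlib


/-- A set `S ⊆ ℝ` is self-similar if it is the attractor (unique nonempty compact
invariant set) of a finite IFS of contractive similitudes on `ℝ`. -/
def IsSelfSimilar (S : Set ℝ) : Prop :=
  S.Nonempty ∧ IsCompact S ∧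
    ∃ (n : ℕ) (r a : Fin n → ℝ), 0 < n ∧ (∀ i, r i ≠ 0 ∧ |r i| < 1) ∧
      S = ⋃ i, (fun x => r i * x + a i) '' S

-- affine maps are open maps
lemma affine_isOpenMap (u v : ℝ) (hu : u ≠ 0) : IsOpenMap (fun x : ℝ => u * x + v) := by
  have h : (fun x : ℝ => u * x + v) = ⇑((Homeomorph.mulLeft₀ u hu).trans (Homeomorph.addRight v)) := by
    funext x; rfl
  rw [h]
  exact Homeomorph.isOpenMap _

lemma affine_injective (u v : ℝ) (hu : u ≠ 0) : Function.Injective (fun x : ℝ => u * x + v) := by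
  intro x y hxy
  simp only [] at hxy
  have : u * x = u * y := by linarith
  exact mul_left_cancel₀ hu this

lemma affine_continuous (u v : ℝ) : Continuous (fun x : ℝ => u * x + v) :=
  (continuous_const.mul continuous_id).add continuous_const

theorem stmt_4 (ℓ : ℕ) (hℓ : 0 < ℓ) (r a : Fin ℓ → ℝ)
    (hr : ∀ i, r i ≠ 0 ∧ |r i| < 1)
    (K : Set ℝ) (hne : K.Nonempty) (hcpt : IsCompact K)
    (hK2 : ∃ x ∈ K, ∃ y ∈ K, x ≠ y)
    (hK : K = ⋃ i, (fun x => r i * x + a i) '' K)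
    (hSSC : ∀ i j : Fin ℓ, i ≠ j →
      Disjoint ((fun x => r i * x + a i) '' K) ((fun x => r j * x + a j) '' K))
    (m : ℕ) (t : Fin (m + 1) → ℝ) (ht : StrictMono t) :
    IsSelfSimilar (⋃ j, (· + t j) '' K) ↔
      ∃ (p : ℕ) (g : Fin p → ℝ → ℝ),
        (∀ q, ∃ c d : ℝ, c ≠ 0 ∧ ∀ x, g q x = c * x + d) ∧
        (⋃ q, g q '' (⋃ j, (· + t j) '' K)) = K := by
  classical
  set Λ : Set ℝ := ⋃ j, (· + t j) '' K with hΛdef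
  set A := sInf K with hAdef
  set B := sSup K with hBdef
  have hAK : A ∈ K := hcpt.sInf_mem hne
  have hBK : B ∈ K := hcpt.sSup_mem hne
  have hKbd : ∀ x ∈ K, A ≤ x ∧ x ≤ B := fun x hx =>
    ⟨csInf_le hcpt.bddBelow hx, le_csSup hcpt.bddAbove hx⟩
  have hAB : A < B := by
    obtain ⟨x, hx, y, hy, hxy⟩ := hK2
    rcases lt_or_gt_of_ne hxy with h | h
    · exact lt_of_le_of_lt (hKbd x hx).1 (lt_of_lt_of_le h (hKbd y hy).2)
    · exact lt_of_le_of_lt (hKbd y hy).1 (lt_of_lt_of_le h (hKbd x hx).2)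
  have hKsubΛ : ∀ j, (· + t j) '' K ⊆ Λ := fun j => Set.subset_iUnion (fun j => (· + t j) '' K) j
  have hΛlb : ∀ y ∈ Λ, A + t 0 ≤ y := by
    intro y hy
    rw [hΛdef] at hy
    simp only [Set.mem_iUnion, Set.mem_image] at hy
    obtain ⟨j, z, hz, rfl⟩ := hy
    have := (hKbd z hz).1
    have := ht.monotone (Fin.zero_le j)
    linarith
  have hΛub : ∀ y ∈ Λ, y ≤ B + t (Fin.last m) := by
    intro y hy
    rw [hΛdef] at hy
    simp only [Set.mem_iUnion, Set.mem_image] at hy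
    obtain ⟨j, z, hz, rfl⟩ := hy
    have := (hKbd z hz).2
    have := ht.monotone (Fin.le_last j)
    linarith
  have hτ : ∃ τ : ℝ, 0 < τ ∧ ∀ j : Fin (m + 1), j ≠ 0 → t 0 + τ ≤ t j := by
    match m with
    | 0 => exact ⟨1, one_pos, fun j hj => absurd (by omega : j = 0) hj⟩
    | Nat.succ s =>
      refine ⟨t 1 - t 0, by have := ht (show (0 : Fin (s+2)) < 1 by simp [Fin.lt_def]); linarith, ?_⟩
      intro j hj
      have h1 : (1 : Fin (s + 2)) ≤ j := by
        rw [Fin.le_def]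
        have : j.val ≠ 0 := fun h => hj (Fin.ext (by simpa using h))
        simp only [Fin.val_one]
        omega
      have := ht.monotone h1
      linarith
  obtain ⟨τ, hτ0, hτle⟩ := hτ
  constructor
  · intro hSS
    unfold IsSelfSimilar at hSS
    obtain ⟨hΛne, hΛcpt, p, c, d, hp, hcd, hΛeq⟩ := hSS
    -- maximal contraction ratios
    obtain ⟨i₀, -, hrmax⟩ := Finset.exists_max_image Finset.univ (fun i => |r i|)
      ⟨⟨0, hℓ⟩, Finset.mem_univ _⟩
    set rmax := |r i₀| with hrmaxdef
    have hrmax0 : 0 ≤ rmax := abs_nonneg _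
    have hrmax1 : rmax < 1 := (hr i₀).2
    have hrmaxle : ∀ i, |r i| ≤ rmax := fun i => hrmax i (Finset.mem_univ i)
    obtain ⟨q₀, -, hcmax⟩ := Finset.exists_max_image Finset.univ (fun q => |c q|)
      ⟨⟨0, hp⟩, Finset.mem_univ _⟩
    set cmax := |c q₀| with hcmaxdef
    have hcmax0 : 0 ≤ cmax := abs_nonneg _
    have hcmax1 : cmax < 1 := (hcd q₀).2
    have hcmaxle : ∀ q, |c q| ≤ cmax := fun q => hcmax q (Finset.mem_univ q)
    -- each first-level piece of K is relatively clopen in K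
    have piece : ∀ i : Fin ℓ, ∃ U : Set ℝ,
        IsOpen U ∧ (fun x => r i * x + a i) '' K = K ∩ U := by
      intro i
      refine ⟨(⋃ j ∈ {j : Fin ℓ | j ≠ i}, (fun x => r j * x + a j) '' K)ᶜ, ?_, ?_⟩
      · rw [isOpen_compl_iff]
        exact (Set.toFinite _).isClosed_biUnion fun j _ =>
          (hcpt.image (affine_continuous _ _)).isClosed
      · apply Set.Subset.antisymm
        · intro x hx
          refine ⟨hK ▸ Set.subset_iUnion (fun i => (fun x => r i * x + a i) '' K) i hx, ?_⟩
          intro hxbad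
          simp only [Set.mem_iUnion, Set.mem_setOf_eq] at hxbad
          obtain ⟨j, hji, hxj⟩ := hxbad
          exact Set.disjoint_left.mp (hSSC i j (Ne.symm hji)) hx hxj
        · rintro x ⟨hxK, hxU⟩
          rw [hK] at hxK
          simp only [Set.mem_iUnion] at hxK
          obtain ⟨j, hxj⟩ := hxK
          rcases eq_or_ne j i with rfl | hji
          · exact hxj
          · exact absurd (by
              simp only [Set.mem_compl_iff, Set.mem_iUnion, Set.mem_setOf_eq, not_exists] at hxU
              exact (hxU j hji hxj).elim) id
    -- cylinders of K containing the minimum point A, relatively clopen, arbitrarily small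
    have cyl : ∀ n : ℕ, ∃ ρ β : ℝ, ρ ≠ 0 ∧ |ρ| ≤ rmax ^ n ∧
        (∃ U : Set ℝ, IsOpen U ∧ (fun x => ρ * x + β) '' K = K ∩ U) ∧
        A ∈ (fun x => ρ * x + β) '' K := by
      intro n
      induction n with
      | zero =>
        refine ⟨1, 0, one_ne_zero, by simp, ⟨Set.univ, isOpen_univ, ?_⟩, ⟨A, hAK, by ring⟩⟩
        have h1 : (fun x : ℝ => 1 * x + 0) = id := funext fun x => by simp
        rw [h1, Set.image_id, Set.inter_univ]
      | succ n ih =>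
        obtain ⟨ρ, β, hρ0, hρle, ⟨U, hUo, hUeq⟩, y, hyK, hyA⟩ := ih
        have hy' : y ∈ ⋃ i, (fun x => r i * x + a i) '' K := hK ▸ hyK
        simp only [Set.mem_iUnion, Set.mem_image] at hy'
        obtain ⟨i, w, hwK, hwy⟩ := hy'
        obtain ⟨Ui, hUio, hUieq⟩ := piece i
        refine ⟨ρ * r i, ρ * a i + β, mul_ne_zero hρ0 (hr i).1, ?_, ?_, ?_⟩
        · rw [abs_mul, pow_succ]
          exact mul_le_mul hρle (hrmaxle i) (abs_nonneg _) (pow_nonneg hrmax0 n)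
        · refine ⟨U ∩ (fun x => ρ * x + β) '' Ui, hUo.inter (affine_isOpenMap ρ β hρ0 Ui hUio), ?_⟩
          have hcomp : (fun x => ρ * r i * x + (ρ * a i + β)) '' K
              = (fun x => ρ * x + β) '' ((fun x => r i * x + a i) '' K) := by
            rw [Set.image_image]
            exact Set.image_congr fun x _ => by ring
          rw [hcomp, hUieq, Set.image_inter (affine_injective ρ β hρ0), hUeq]
          ext z
          constructor
          · rintro ⟨⟨hzK, hzU⟩, hzUi⟩
            exact ⟨hzK, hzU, hzUi⟩
          · rintro ⟨hzK, hzU, hzUi⟩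
            exact ⟨⟨hzK, hzU⟩, hzUi⟩
        · refine ⟨w, hwK, ?_⟩
          have : r i * w + a i = y := hwy
          calc ρ * r i * w + (ρ * a i + β) = ρ * (r i * w + a i) + β := by ring
            _ = ρ * y + β := by rw [this]
            _ = A := hyA
    -- pieces of Λ at every level
    have pieces : ∀ n : ℕ, ∃ (N : ℕ) (γ δ : Fin N → ℝ),
        (∀ k, γ k ≠ 0 ∧ |γ k| ≤ cmax ^ n) ∧ Λ = ⋃ k, (fun x => γ k * x + δ k) '' Λ := by
      intro n
      induction n with
      | zero =>
        refine ⟨1, fun _ => 1, fun _ => 0, fun k => ⟨one_ne_zero, by norm_num⟩, ?_⟩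
        apply Set.Subset.antisymm
        · intro x hx
          exact Set.mem_iUnion.mpr ⟨0, x, hx, by norm_num⟩
        · intro x hx
          simp only [Set.mem_iUnion, Set.mem_image] at hx
          obtain ⟨k, z, hz, rfl⟩ := hx
          show (1 : ℝ) * z + 0 ∈ Λ
          rw [show (1 : ℝ) * z + 0 = z by ring]
          exact hz
      | succ n ih =>
        obtain ⟨N, γ, δ, hγ, hΛN⟩ := ih
        refine ⟨N * p, fun k => γ (finProdFinEquiv.symm k).1 * c (finProdFinEquiv.symm k).2,
          fun k => γ (finProdFinEquiv.symm k).1 * d (finProdFinEquiv.symm k).2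
            + δ (finProdFinEquiv.symm k).1, ?_, ?_⟩
        · intro k
          refine ⟨mul_ne_zero (hγ _).1 (hcd _).1, ?_⟩
          rw [abs_mul, pow_succ]
          exact mul_le_mul (hγ _).2 (hcmaxle _) (abs_nonneg _) (pow_nonneg hcmax0 n)
        · have key : Λ = ⋃ (w : Fin N × Fin p),
              (fun x => (γ w.1 * c w.2) * x + (γ w.1 * d w.2 + δ w.1)) '' Λ := by
            ext x
            simp only [Set.mem_iUnion, Set.mem_image]
            constructor
            · intro hx
              rw [hΛN] at hx
              simp only [Set.mem_iUnion, Set.mem_image] at hx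
              obtain ⟨k, z, hzΛ, rfl⟩ := hx
              rw [hΛeq] at hzΛ
              simp only [Set.mem_iUnion, Set.mem_image] at hzΛ
              obtain ⟨q, w, hwΛ, rfl⟩ := hzΛ
              exact ⟨(k, q), w, hwΛ, by ring⟩
            · rintro ⟨⟨k, q⟩, w, hwΛ, rfl⟩
              have h1 : c q * w + d q ∈ Λ := by
                rw [hΛeq]
                exact Set.mem_iUnion.mpr ⟨q, w, hwΛ, rfl⟩
              have h2 : γ k * (c q * w + d q) + δ k ∈ Λ := by
                rw [hΛN]
                exact Set.mem_iUnion.mpr ⟨k, ⟨c q * w + d q, h1, rfl⟩⟩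
              show (γ k * c q) * w + (γ k * d q + δ k) ∈ Λ
              have h3 : (γ k * c q) * w + (γ k * d q + δ k)
                  = γ k * (c q * w + d q) + δ k := by ring
              rw [h3]
              exact h2
          calc Λ = _ := key
            _ = _ := (finProdFinEquiv.symm.surjective.iUnion_comp
                (fun w : Fin N × Fin p =>
                  (fun x => (γ w.1 * c w.2) * x + (γ w.1 * d w.2 + δ w.1)) '' Λ)).symm
    -- choose a small cylinder at the minimum of K
    obtain ⟨n, hn⟩ := exists_pow_lt_of_lt_one
      (show (0:ℝ) < τ / 2 / (B - A) from div_pos (by linarith) (by linarith)) hrmax1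
    have hDn : rmax ^ n * (B - A) ≤ τ / 2 := ((lt_div_iff₀ (by linarith)).mp hn).le
    obtain ⟨ρ, β, hρ0, hρle, ⟨U, hUo, hUeq⟩, hAC₀⟩ := cyl n
    set C₀ := (fun x => ρ * x + β) '' K with hC₀def
    have hC₀K : C₀ ⊆ K := hUeq ▸ Set.inter_subset_left
    have hC₀cpt : IsCompact C₀ := hcpt.image (affine_continuous ρ β)
    have hC₀ne : C₀.Nonempty := ⟨A, hAC₀⟩
    obtain ⟨y₀, hy₀K, hy₀A⟩ := hAC₀
    have hy₀A' : ρ * y₀ + β = A := hy₀A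
    have hC₀ub : ∀ x ∈ C₀, x ≤ A + τ / 2 := by
      rintro x ⟨k, hkK, rfl⟩
      show ρ * k + β ≤ A + τ / 2
      have h1 : (ρ * k + β) - A = ρ * (k - y₀) := by rw [← hy₀A']; ring
      have h2 : |(ρ * k + β) - A| ≤ rmax ^ n * (B - A) := by
        rw [h1, abs_mul]
        exact mul_le_mul hρle
          (abs_le.mpr ⟨by linarith [(hKbd k hkK).1, (hKbd y₀ hy₀K).2],
            by linarith [(hKbd k hkK).2, (hKbd y₀ hy₀K).1]⟩)
          (abs_nonneg _) (pow_nonneg hrmax0 n)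
      have h3 := le_abs_self ((ρ * k + β) - A)
      linarith
    -- separation of the cylinder from the rest of K
    have hsep : ∃ ε : ℝ, 0 < ε ∧ ∀ x ∈ C₀, ∀ z ∈ K, z ∉ C₀ → ε ≤ |x - z| := by
      by_cases hKC : (K \ C₀).Nonempty
      · have hdiff : K \ C₀ = K ∩ Uᶜ := by
          rw [hUeq]
          ext z
          simp only [Set.mem_diff, Set.mem_inter_iff, Set.mem_compl_iff]
          tauto
        have hclosed : IsClosed (K \ C₀) := by
          rw [hdiff]
          exact hcpt.isClosed.inter (isClosed_compl_iff.mpr hUo)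
        obtain ⟨x₀, hx₀C, hmin⟩ := hC₀cpt.exists_isMinOn hC₀ne
          (Metric.continuous_infDist_pt (K \ C₀)).continuousOn
        have hx₀pos : 0 < Metric.infDist x₀ (K \ C₀) :=
          (hclosed.notMem_iff_infDist_pos hKC).mp (fun h => h.2 hx₀C)
        refine ⟨_, hx₀pos, ?_⟩
        intro x hx z hzK hzC
        calc Metric.infDist x₀ (K \ C₀) ≤ Metric.infDist x (K \ C₀) :=
              isMinOn_iff.mp hmin x hx
          _ ≤ dist x z := Metric.infDist_le_dist_of_mem ⟨hzK, hzC⟩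
          _ = |x - z| := Real.dist_eq x z
      · exact ⟨1, one_pos, fun x hx z hzK hzC => absurd ⟨z, hzK, hzC⟩ hKC⟩
    obtain ⟨ε₁, hε₁0, hε₁⟩ := hsep
    set ρgap := min ε₁ (τ / 2) with hρgapdef
    have hρgap0 : 0 < ρgap := lt_min hε₁0 (by linarith)
    set E₀ := (B + t (Fin.last m)) - (A + t 0) with hE₀def
    have htl : t 0 ≤ t (Fin.last m) := ht.monotone (Fin.zero_le _)
    have hE₀0 : 0 < E₀ := by rw [hE₀def]; linarith
    obtain ⟨n', hn'⟩ := exists_pow_lt_of_lt_one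
      (show (0:ℝ) < ρgap / E₀ by positivity) hcmax1
    have hn'E : cmax ^ n' * E₀ < ρgap := (lt_div_iff₀ hE₀0).mp hn'
    obtain ⟨N, γ, δ, hγ, hΛN⟩ := pieces n'
    have hTsubΛ : ∀ k, (fun x => γ k * x + δ k) '' Λ ⊆ Λ := by
      intro k y hy
      rw [hΛN]
      exact Set.mem_iUnion.mpr ⟨k, hy⟩
    have hpd : ∀ k, ∀ u ∈ Λ, ∀ v ∈ Λ, |(γ k * u + δ k) - (γ k * v + δ k)| < ρgap := by
      intro k u hu v hv
      rw [show (γ k * u + δ k) - (γ k * v + δ k) = γ k * (u - v) by ring, abs_mul]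
      have h2 : |u - v| ≤ E₀ := abs_le.mpr
        ⟨by linarith [hΛlb u hu, hΛub v hv], by linarith [hΛub u hu, hΛlb v hv]⟩
      calc |γ k| * |u - v| ≤ cmax ^ n' * E₀ :=
            mul_le_mul (hγ k).2 h2 (abs_nonneg _) (pow_nonneg hcmax0 n')
        _ < ρgap := hn'E
    set C := (fun x => x + t 0) '' C₀ with hCdef
    have hCsubΛ : C ⊆ Λ := by
      rintro x ⟨x', hx', rfl⟩
      exact hKsubΛ 0 ⟨x', hC₀K hx', rfl⟩
    -- the cylinder-translate C is well separated inside Λ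
    have hgap : ∀ x ∈ C, ∀ y ∈ Λ, y ∉ C → ρgap ≤ |x - y| := by
      rintro x hxC y hyΛ hyC
      obtain ⟨x', hx'C₀, rfl⟩ := hxC
      rw [hΛdef] at hyΛ
      simp only [Set.mem_iUnion, Set.mem_image] at hyΛ
      obtain ⟨j, z, hzK, rfl⟩ := hyΛ
      rcases eq_or_ne j 0 with rfl | hj
      · have hzC₀ : z ∉ C₀ := fun h => hyC ⟨z, h, rfl⟩
        have h1 := hε₁ x' hx'C₀ z hzK hzC₀
        show ρgap ≤ |x' + t 0 - (z + t 0)|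
        rw [show x' + t 0 - (z + t 0) = x' - z by ring]
        exact le_trans (min_le_left _ _) h1
      · have h1 := hτle j hj
        have h3 : τ / 2 ≤ (z + t j) - (x' + t 0) := by
          linarith [(hKbd z hzK).1, hC₀ub x' hx'C₀]
        have h4 : (z + t j) - (x' + t 0) ≤ |x' + t 0 - (z + t j)| := by
          rw [abs_sub_comm]
          exact le_abs_self _
        have h5 : ρgap ≤ τ / 2 := min_le_right _ _
        show ρgap ≤ |x' + t 0 - (z + t j)|
        linarith
    -- any small piece of Λ meeting C lies inside C
    have hin : ∀ k, ((fun x => γ k * x + δ k) '' Λ ∩ C).Nonempty →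
        (fun x => γ k * x + δ k) '' Λ ⊆ C := by
      intro k hk
      obtain ⟨z, ⟨u, huΛ, huz⟩, hzC⟩ := hk
      have huz' : γ k * u + δ k = z := huz
      rintro y ⟨v, hvΛ, rfl⟩
      by_contra hyC
      have hyΛ : γ k * v + δ k ∈ Λ := hTsubΛ k ⟨v, hvΛ, rfl⟩
      have h1 := hgap z hzC _ hyΛ hyC
      have h2 := hpd k u huΛ v hvΛ
      rw [huz'] at h2
      exact absurd h1 (not_le.mpr h2)
    have hCne : C.Nonempty := ⟨A + t 0, A, ⟨y₀, hy₀K, hy₀A⟩, rfl⟩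
    obtain ⟨x₁, hx₁C⟩ := hCne
    have hx₁Λ : x₁ ∈ Λ := hCsubΛ hx₁C
    rw [hΛN] at hx₁Λ
    simp only [Set.mem_iUnion] at hx₁Λ
    obtain ⟨k₀, hk₀⟩ := hx₁Λ
    have hVk₀ : ((fun x => γ k₀ * x + δ k₀) '' Λ ∩ C).Nonempty := ⟨x₁, hk₀, hx₁C⟩
    -- the inverse of the cylinder map recovers K from C
    have hψC : (fun y => (y - β - t 0) / ρ) '' C = K := by
      apply Set.Subset.antisymm
      · rintro _ ⟨y, hyC, rfl⟩
        obtain ⟨x', hx'C₀, rfl⟩ := hyC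
        obtain ⟨w, hwK, rfl⟩ := hx'C₀
        show ((ρ * w + β) + t 0 - β - t 0) / ρ ∈ K
        rw [show ((ρ * w + β) + t 0 - β - t 0) / ρ = w by field_simp; ring]
        exact hwK
      · intro z hzK
        refine ⟨ρ * z + β + t 0, ⟨ρ * z + β, ⟨z, hzK, rfl⟩, rfl⟩, ?_⟩
        show (ρ * z + β + t 0 - β - t 0) / ρ = z
        field_simp
        ring
    refine ⟨N, fun k => if ((fun x => γ k * x + δ k) '' Λ ∩ C).Nonempty
        then (fun x => (γ k * x + δ k - β - t 0) / ρ)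
        else (fun x => (γ k₀ * x + δ k₀ - β - t 0) / ρ), ?_, ?_⟩
    · intro q
      by_cases hq : ((fun x => γ q * x + δ q) '' Λ ∩ C).Nonempty
      · refine ⟨γ q / ρ, (δ q - β - t 0) / ρ, div_ne_zero (hγ q).1 hρ0, fun x => ?_⟩
        show (if ((fun x => γ q * x + δ q) '' Λ ∩ C).Nonempty
            then (fun x => (γ q * x + δ q - β - t 0) / ρ)
            else (fun x => (γ k₀ * x + δ k₀ - β - t 0) / ρ)) x = γ q / ρ * x + (δ q - β - t 0) / ρ
        rw [if_pos hq]
        show (γ q * x + δ q - β - t 0) / ρ = γ q / ρ * x + (δ q - β - t 0) / ρ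
        field_simp
        ring
      · refine ⟨γ k₀ / ρ, (δ k₀ - β - t 0) / ρ, div_ne_zero (hγ k₀).1 hρ0, fun x => ?_⟩
        show (if ((fun x => γ q * x + δ q) '' Λ ∩ C).Nonempty
            then (fun x => (γ q * x + δ q - β - t 0) / ρ)
            else (fun x => (γ k₀ * x + δ k₀ - β - t 0) / ρ)) x = γ k₀ / ρ * x + (δ k₀ - β - t 0) / ρ
        rw [if_neg hq]
        show (γ k₀ * x + δ k₀ - β - t 0) / ρ = γ k₀ / ρ * x + (δ k₀ - β - t 0) / ρ
        field_simp
        ring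
    · apply Set.Subset.antisymm
      · intro x hx
        simp only [Set.mem_iUnion] at hx
        obtain ⟨q, hxq⟩ := hx
        by_cases hq : ((fun x => γ q * x + δ q) '' Λ ∩ C).Nonempty
        · rw [if_pos hq] at hxq
          obtain ⟨z, hzΛ, rfl⟩ := hxq
          have hTz : γ q * z + δ q ∈ C := hin q hq ⟨z, hzΛ, rfl⟩
          rw [← hψC]
          exact ⟨γ q * z + δ q, hTz, rfl⟩
        · rw [if_neg hq] at hxq
          obtain ⟨z, hzΛ, rfl⟩ := hxq
          have hTz : γ k₀ * z + δ k₀ ∈ C := hin k₀ hVk₀ ⟨z, hzΛ, rfl⟩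
          rw [← hψC]
          exact ⟨γ k₀ * z + δ k₀, hTz, rfl⟩
      · intro x hxK
        rw [← hψC] at hxK
        obtain ⟨y, hyC, rfl⟩ := hxK
        have hyΛ : y ∈ Λ := hCsubΛ hyC
        rw [hΛN] at hyΛ
        simp only [Set.mem_iUnion] at hyΛ
        obtain ⟨k, hyk⟩ := hyΛ
        have hVk : ((fun x => γ k * x + δ k) '' Λ ∩ C).Nonempty := ⟨y, hyk, hyC⟩
        obtain ⟨z, hzΛ, hzy⟩ := hyk
        have hzy' : γ k * z + δ k = y := hzy
        simp only [Set.mem_iUnion, Set.mem_image]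
        refine ⟨k, z, hzΛ, ?_⟩
        rw [if_pos hVk]
        show (γ k * z + δ k - β - t 0) / ρ = (y - β - t 0) / ρ
        rw [hzy']
  · rintro ⟨p, g, hg, hgU⟩
    choose c d hc0 hgq using hg
    have hgfun : ∀ q, g q = fun x => c q * x + d q := fun q => funext (hgq q)
    have hKΛ : K = ⋃ q, (fun x => c q * x + d q) '' Λ := by
      rw [← hgU]
      exact Set.iUnion_congr fun q => by rw [hgfun q]
    have hsub : ∀ q, (fun x => c q * x + d q) '' Λ ⊆ K := fun q =>
      hKΛ ▸ Set.subset_iUnion (fun q => (fun x => c q * x + d q) '' Λ) q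
    have hp : 0 < p := by
      rcases Nat.eq_zero_or_pos p with h | h
      · subst h
        rw [Set.iUnion_of_empty] at hgU
        exact absurd hgU.symm (Set.nonempty_iff_ne_empty.mp hne)
      · exact h
    have hu : A + t 0 ∈ Λ := hKsubΛ 0 ⟨A, hAK, rfl⟩
    have hv : B + t (Fin.last m) ∈ Λ := hKsubΛ (Fin.last m) ⟨B, hBK, rfl⟩
    have hcle : ∀ q, |c q| ≤ 1 := by
      intro q
      have h1 : c q * (A + t 0) + d q ∈ K := hsub q ⟨_, hu, rfl⟩
      have h2 : c q * (B + t (Fin.last m)) + d q ∈ K := hsub q ⟨_, hv, rfl⟩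
      have hb1 := hKbd _ h1
      have hb2 := hKbd _ h2
      have h3 : |(c q * (A + t 0) + d q) - (c q * (B + t (Fin.last m)) + d q)| ≤ B - A := by
        rw [abs_le]; constructor <;> linarith [hb1.1, hb1.2, hb2.1, hb2.2]
      have h4 : (c q * (A + t 0) + d q) - (c q * (B + t (Fin.last m)) + d q)
          = c q * ((A + t 0) - (B + t (Fin.last m))) := by ring
      rw [h4, abs_mul] at h3
      have h5 : |(A + t 0) - (B + t (Fin.last m))| = (B - A) + (t (Fin.last m) - t 0) := by
        have hts : t 0 ≤ t (Fin.last m) := ht.monotone (Fin.zero_le _)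
        rw [abs_of_nonpos (by linarith)]; ring
      rw [h5] at h3
      have hts : t 0 ≤ t (Fin.last m) := ht.monotone (Fin.zero_le _)
      nlinarith [abs_nonneg (c q)]
    set e1 : Fin (m + 1) × Fin ℓ ≃ Fin ((m + 1) * ℓ) := finProdFinEquiv
    set e2 : Fin ((m + 1) * ℓ) × Fin p ≃ Fin ((m + 1) * ℓ * p) := finProdFinEquiv
    set eT : (Fin (m + 1) × Fin ℓ) × Fin p ≃ Fin ((m + 1) * ℓ * p) :=
      (e1.prodCongr (Equiv.refl (Fin p))).trans e2 with heT
    unfold IsSelfSimilar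
    refine ⟨⟨A + t 0, hu⟩, ?_, (m + 1) * ℓ * p,
      fun k => r (eT.symm k).1.2 * c (eT.symm k).2,
      fun k => r (eT.symm k).1.2 * d (eT.symm k).2 + a (eT.symm k).1.2 + t (eT.symm k).1.1,
      by positivity, ?_, ?_⟩
    · rw [hΛdef]
      exact isCompact_iUnion fun j => hcpt.image (continuous_id.add continuous_const)
    · intro k
      constructor
      · exact mul_ne_zero (hr _).1 (hc0 _)
      · rw [abs_mul]
        calc |r (eT.symm k).1.2| * |c (eT.symm k).2|
            ≤ |r (eT.symm k).1.2| * 1 :=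
              mul_le_mul_of_nonneg_left (hcle _) (abs_nonneg _)
          _ = |r (eT.symm k).1.2| := mul_one _
          _ < 1 := (hr _).2
    · have key : Λ = ⋃ (w : (Fin (m + 1) × Fin ℓ) × Fin p),
          (fun x => (r w.1.2 * c w.2) * x + (r w.1.2 * d w.2 + a w.1.2 + t w.1.1)) '' Λ := by
        ext x
        simp only [Set.mem_iUnion, Set.mem_image]
        constructor
        · intro hx
          rw [hΛdef] at hx
          simp only [Set.mem_iUnion, Set.mem_image] at hx
          obtain ⟨j, y, hyK, rfl⟩ := hx
          rw [hK] at hyK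
          simp only [Set.mem_iUnion, Set.mem_image] at hyK
          obtain ⟨i, w, hwK, rfl⟩ := hyK
          rw [hKΛ] at hwK
          simp only [Set.mem_iUnion, Set.mem_image] at hwK
          obtain ⟨q, z, hzΛ, rfl⟩ := hwK
          exact ⟨((j, i), q), z, hzΛ, by ring⟩
        · rintro ⟨⟨⟨j, i⟩, q⟩, z, hzΛ, rfl⟩
          have hwK : c q * z + d q ∈ K := hsub q ⟨z, hzΛ, rfl⟩
          have hyK : r i * (c q * z + d q) + a i ∈ K := by
            rw [hK]
            simp only [Set.mem_iUnion, Set.mem_image]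
            exact ⟨i, _, hwK, rfl⟩
          rw [hΛdef]
          simp only [Set.mem_iUnion, Set.mem_image]
          exact ⟨j, _, hyK, by ring⟩
      calc Λ = ⋃ (w : (Fin (m + 1) × Fin ℓ) × Fin p),
          (fun x => (r w.1.2 * c w.2) * x + (r w.1.2 * d w.2 + a w.1.2 + t w.1.1)) '' Λ := key
        _ = _ := (eT.symm.surjective.iUnion_comp _).symm
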